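/- For every integer n ≥ 2, one has (n − 1/2)^{2n−2} / (ζ(n) · (n−2)!) ≤ 2^{n − 3/2} · e^{2n−1} / (π^{3/2} · max(√(n−2), 1)). -/

import Mathlib

/-- `ζ(k) = (((k−1)/2)!)²` for odd `k`, and `ζ(k) = (k/2)!((k−2)/2)!` for even `k`. -/
noncomputable def zeta (k : ℕ) : ℝ :=
  if k % 2 = 1 then ((((k - 1) / 2).factorial : ℝ)) ^ 2
  else ((k / 2).factorial : ℝ) * (((k - 2) / 2).factorial : ℝ)

open Real

lemma le_exp_half {x : ℝ} (hx : 1 ≤ x) : x ≤ Real.exp ((x - x⁻¹) / 2) := by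
  rcases eq_or_lt_of_le hx with h | h
  · rw [← h]; norm_num
  · have hx0 : (0:ℝ) < x := by linarith
    have hlog : Real.log x < (x - x⁻¹) / 2 := by
      have h2 := Real.self_lt_sinh_iff.mpr (Real.log_pos h)
      rwa [Real.sinh_log hx0] at h2
    calc x = Real.exp (Real.log x) := (Real.exp_log hx0).symm
      _ ≤ _ := Real.exp_le_exp.mpr hlog.le

lemma core_odd (c : ℕ) :
    (4*(c:ℝ)+5) ^ (4*c+4) ≤ 2^(6*c+7) * Real.exp 1 ^ 2 * ((c:ℝ)+1)^(2*c+3) * (2*(c:ℝ)+1)^(2*c+1) := by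
  have e1 : (0:ℝ) < 4*(c:ℝ)+4 := by positivity
  have e2 : (0:ℝ) < 2*(c:ℝ)+1 := by positivity
  have h1 : (4*(c:ℝ)+5) ≤ (4*(c:ℝ)+4) * Real.exp (1/(4*(c:ℝ)+4)) := by
    have h := Real.add_one_le_exp (1/(4*(c:ℝ)+4))
    have h' := mul_le_mul_of_nonneg_left h e1.le
    have hc : (4*(c:ℝ)+4) * (1/(4*(c:ℝ)+4)) = 1 := by field_simp
    nlinarith [h']
  have h2 : (2*(c:ℝ)+2) ≤ (2*(c:ℝ)+1) * Real.exp (1/(2*(c:ℝ)+1)) := by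
    have h := Real.add_one_le_exp (1/(2*(c:ℝ)+1))
    have h' := mul_le_mul_of_nonneg_left h e2.le
    have hc : (2*(c:ℝ)+1) * (1/(2*(c:ℝ)+1)) = 1 := by field_simp
    nlinarith [h']
  have hp1 : (4*(c:ℝ)+5) ^ (4*c+4) ≤ ((4*(c:ℝ)+4) * Real.exp (1/(4*(c:ℝ)+4))) ^ (4*c+4) :=
    pow_le_pow_left₀ (by positivity) h1 _
  have hexp1 : (Real.exp (1/(4*(c:ℝ)+4))) ^ (4*c+4) = Real.exp 1 := by
    rw [← Real.exp_nat_mul]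
    congr 1
    push_cast
    field_simp
  have hp2 : ((2:ℝ)*(c:ℝ)+2) ^ (2*c+1) ≤ ((2*(c:ℝ)+1) * Real.exp (1/(2*(c:ℝ)+1))) ^ (2*c+1) :=
    pow_le_pow_left₀ (by positivity) h2 _
  have hexp2 : (Real.exp (1/(2*(c:ℝ)+1))) ^ (2*c+1) = Real.exp 1 := by
    rw [← Real.exp_nat_mul]
    congr 1
    push_cast
    field_simp
  calc (4*(c:ℝ)+5) ^ (4*c+4)
      ≤ ((4*(c:ℝ)+4)) ^ (4*c+4) * Real.exp 1 := by
        rw [mul_pow, hexp1] at hp1; exact hp1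
    _ = 2^(6*c+7) * ((c:ℝ)+1)^(2*c+3) * ((2*(c:ℝ)+2) ^ (2*c+1)) * Real.exp 1 := by
        rw [show (4*(c:ℝ)+4) = 2^2 * ((c:ℝ)+1) by ring, mul_pow, ← pow_mul,
          show (2*(c:ℝ)+2) = 2 * ((c:ℝ)+1) by ring, mul_pow]
        ring
    _ ≤ 2^(6*c+7) * ((c:ℝ)+1)^(2*c+3) * ((2*(c:ℝ)+1) ^ (2*c+1) * Real.exp 1) * Real.exp 1 := by
        rw [mul_pow, hexp2] at hp2
        gcongr
    _ = 2^(6*c+7) * Real.exp 1 ^ 2 * ((c:ℝ)+1)^(2*c+3) * (2*(c:ℝ)+1)^(2*c+1) := by ring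

lemma core_even (c : ℕ) :
    (4*(c:ℝ)+7) ^ (4*c+6) ≤ 2^(8*c+12) * Real.exp 1 ^ 2 * Real.sqrt ((c:ℝ)+2) *
      Real.sqrt ((c:ℝ)+1) * ((c:ℝ)+2)^(c+2) * ((c:ℝ)+1)^(3*c+3) := by
  set A : ℝ := (c:ℝ)+2 with hA
  set B : ℝ := (c:ℝ)+1 with hB
  have hA0 : (0:ℝ) < A := by rw [hA]; positivity
  have hB0 : (0:ℝ) < B := by rw [hB]; positivity
  have e1 : (0:ℝ) < 4*(c:ℝ)+8 := by positivity
  set t : ℝ := (2*(c:ℝ)+3)/(2*B*A) with ht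
  -- step 1 : 4c+7 ≤ (4c+8) exp(-1/(4c+8))
  have h1 : (4*(c:ℝ)+7) ≤ (4*(c:ℝ)+8) * Real.exp (-(1/(4*(c:ℝ)+8))) := by
    have h := Real.add_one_le_exp (-(1/(4*(c:ℝ)+8)))
    have h' := mul_le_mul_of_nonneg_left h e1.le
    have hc : (4*(c:ℝ)+8) * (1/(4*(c:ℝ)+8)) = 1 := by field_simp
    nlinarith [h']
  have hp1 : (4*(c:ℝ)+7) ^ (4*c+6) ≤ ((4*(c:ℝ)+8)) ^ (4*c+6) *
      Real.exp (-((4*(c:ℕ)+6:ℕ)/(4*(c:ℝ)+8))) := by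
    have := pow_le_pow_left₀ (by positivity) h1 (4*c+6)
    rw [mul_pow, ← Real.exp_nat_mul] at this
    convert this using 3
    push_cast
    rfl; push_cast; ring
  -- step 2 : A ≤ B exp t
  have h2 : A ≤ B * Real.exp t := by
    have hx : (1:ℝ) ≤ A/B := (one_le_div hB0).mpr (by rw [hA, hB]; linarith)
    have h := le_exp_half hx
    have harg : ((A/B) - (A/B)⁻¹)/2 = t := by
      rw [ht, hA, hB]
      field_simp
      ring
    rw [harg] at h
    calc A = B * (A/B) := by field_simp
      _ ≤ B * Real.exp t := by gcongr
  -- step 3 : √A ≤ √B exp(t/2)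
  have h3 : Real.sqrt A ≤ Real.sqrt B * Real.exp (t/2) := by
    have h := Real.sqrt_le_sqrt h2
    rwa [Real.sqrt_mul hB0.le, show Real.exp t = (Real.exp (t/2))^2 by
        rw [← Real.exp_nat_mul]; norm_num; ring_nf, Real.sqrt_sq (Real.exp_pos _).le] at h
  have h4 : A ^ (3*c+3) ≤ B ^ (3*c+3) * Real.exp ((3*(c:ℝ)+3) * t) := by
    have := pow_le_pow_left₀ hA0.le h2 (3*c+3)
    rwa [mul_pow, ← Real.exp_nat_mul, show ((3*c+3:ℕ):ℝ) * t = (3*(c:ℝ)+3) * t by push_cast; ring]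
      at this
  have hAA : Real.sqrt A * Real.sqrt A = A := Real.mul_self_sqrt hA0.le
  -- scalar exponent inequality
  have hscal : (3*(c:ℝ)+3) * t + t/2 + (-((4*(c:ℕ)+6:ℕ)/(4*(c:ℝ)+8))) ≤ 2 := by
    have key : 2 - ((3*(c:ℝ)+3) * t + t/2 + (-((4*(c:ℕ)+6:ℕ)/(4*(c:ℝ)+8)))) =
        (8*(c:ℝ)^2+20*(c:ℝ)+8)/(4*((c:ℝ)+1)*((c:ℝ)+2)*(4*(c:ℝ)+8)) := by
      rw [ht, hA, hB]
      push_cast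
      field_simp
      ring
    have hfrac : (0:ℝ) ≤ (8*(c:ℝ)^2+20*(c:ℝ)+8)/(4*((c:ℝ)+1)*((c:ℝ)+2)*(4*(c:ℝ)+8)) := by
      positivity
    linarith
  calc (4*(c:ℝ)+7) ^ (4*c+6)
      ≤ ((4*(c:ℝ)+8)) ^ (4*c+6) * Real.exp (-((4*(c:ℕ)+6:ℕ)/(4*(c:ℝ)+8))) := hp1
    _ = 2^(8*c+12) * (A ^ (3*c+3) * (Real.sqrt A * ((Real.sqrt A * A^(c+2)) *
          Real.exp (-((4*(c:ℕ)+6:ℕ)/(4*(c:ℝ)+8)))))) := by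
        have hsplit : ((4*(c:ℝ)+8)) ^ (4*c+6) =
            2^(8*c+12) * (A^(3*c+3) * (Real.sqrt A * (Real.sqrt A * A^(c+2)))) := by
          rw [show (4*(c:ℝ)+8) = 2^2 * A by rw [hA]; ring, mul_pow, ← pow_mul,
            show 2*(4*c+6) = 8*c+12 by ring,
            show (4*c+6) = ((3*c+3)+(c+2))+1 by ring,
            show A ^ (((3*c+3)+(c+2))+1) = A ^ ((3*c+3)+(c+2)) * A from pow_succ A _,
            show A ^ ((3*c+3)+(c+2)) = A^(3*c+3) * A^(c+2) from pow_add A _ _]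
          linear_combination (2^(8*c+12) * A^(3*c+3) * A^(c+2)) * hAA.symm
        rw [hsplit]
        ring
    _ ≤ 2^(8*c+12) * ((B ^ (3*c+3) * Real.exp ((3*(c:ℝ)+3) * t)) *
          ((Real.sqrt B * Real.exp (t/2)) * ((Real.sqrt A * A^(c+2)) *
          Real.exp (-((4*(c:ℕ)+6:ℕ)/(4*(c:ℝ)+8)))))) := by
        gcongr
    _ = 2^(8*c+12) * Real.sqrt A * Real.sqrt B * A^(c+2) * B^(3*c+3) *
          Real.exp ((3*(c:ℝ)+3) * t + t/2 + (-((4*(c:ℕ)+6:ℕ)/(4*(c:ℝ)+8)))) := by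
        rw [Real.exp_add, Real.exp_add]
        ring
    _ ≤ 2^(8*c+12) * Real.sqrt A * Real.sqrt B * A^(c+2) * B^(3*c+3) * Real.exp 2 := by
        gcongr
    _ = 2^(8*c+12) * Real.exp 1 ^ 2 * Real.sqrt A * Real.sqrt B * A^(c+2) * B^(3*c+3) := by
        rw [show (2:ℝ) = 1 + 1 by norm_num, Real.exp_add]
        ring


lemma sqrtpi_le_stirling (m : ℕ) : Real.sqrt Real.pi ≤ Stirling.stirlingSeq (m + 1) := by
  have hpos : (0:ℝ) < Real.sqrt Real.pi := Real.sqrt_pos.mpr Real.pi_pos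
  have hcont : Filter.Tendsto (Real.log ∘ Stirling.stirlingSeq ∘ Nat.succ) Filter.atTop
      (nhds (Real.log (Real.sqrt Real.pi))) :=
    (Real.continuousAt_log hpos.ne').tendsto.comp
      (Stirling.tendsto_stirlingSeq_sqrt_pi.comp (Filter.tendsto_add_atTop_nat 1))
  have h := Stirling.log_stirlingSeq'_antitone.le_of_tendsto hcont m
  exact (Real.log_le_log_iff hpos (Stirling.stirlingSeq'_pos m)).mp h

lemma stirling_fac (m : ℕ) (hm : 1 ≤ m) :
    Real.sqrt Real.pi * Real.sqrt 2 * Real.sqrt m * (m:ℝ)^m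
      ≤ (m.factorial : ℝ) * Real.exp 1 ^ m := by
  obtain ⟨k, rfl⟩ : ∃ k, m = k + 1 := ⟨m - 1, by omega⟩
  have h := sqrtpi_le_stirling k
  rw [Stirling.stirlingSeq] at h
  have hd : (0:ℝ) < Real.sqrt (2 * (k + 1 : ℕ)) * (((k + 1 : ℕ):ℝ) / Real.exp 1) ^ (k + 1) := by
    positivity
  rw [le_div_iff₀ hd] at h
  have he : (0:ℝ) < Real.exp 1 ^ (k + 1) := by positivity
  calc Real.sqrt Real.pi * Real.sqrt 2 * Real.sqrt (k + 1 : ℕ) * ((k + 1 : ℕ):ℝ) ^ (k + 1)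
      = Real.sqrt Real.pi * (Real.sqrt (2 * (k + 1 : ℕ)) * (((k + 1 : ℕ):ℝ) / Real.exp 1) ^ (k + 1)) * Real.exp 1 ^ (k + 1) := by
        rw [Real.sqrt_mul (by norm_num : (0:ℝ) ≤ 2), div_pow]
        push_cast
        field_simp
    _ ≤ ((k + 1).factorial : ℝ) * Real.exp 1 ^ (k + 1) := mul_le_mul_of_nonneg_right h he.le

lemma pi_rpow_32 : Real.pi ^ ((3:ℝ)/2) = Real.sqrt Real.pi ^ 3 := by
  rw [Real.sqrt_eq_rpow, ← Real.rpow_natCast (Real.pi ^ (1/(2:ℝ))) 3,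
    ← Real.rpow_mul Real.pi_pos.le]
  norm_num

lemma bridge_even (c : ℕ)
    (core : (4*(c:ℝ)+7) ^ (4*c+6) ≤ 2^(8*c+12) * Real.exp 1 ^ 2 * Real.sqrt ((c:ℝ)+2) *
      Real.sqrt ((c:ℝ)+1) * ((c:ℝ)+2)^(c+2) * ((c:ℝ)+1)^(3*c+3)) :
    ((2*(c:ℝ)+4) - 1/2) ^ (4*c+6) /
        ((((c+2).factorial : ℝ) * ((c+1).factorial : ℝ)) * (((2*c+2).factorial : ℝ)))
      ≤ (2:ℝ) ^ ((2*(c:ℝ)+4) - 3/2) * Real.exp 1 ^ (4*c+7) /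
          (Real.pi ^ ((3:ℝ)/2) * Real.sqrt (2*(c:ℝ)+2)) := by
  have hs2 : Real.sqrt 2 * Real.sqrt 2 = 2 := Real.mul_self_sqrt (by norm_num)
  have S1 := stirling_fac (c+2) (by omega)
  have S2 := stirling_fac (c+1) (by omega)
  have S3 := stirling_fac (2*c+2) (by omega)
  push_cast at S1 S2 S3
  rw [show ((2:ℝ)*(c:ℝ)+2)^(2*c+2) = 2^(2*c+2)*((c:ℝ)+1)^(2*c+2) by
    rw [show (2:ℝ)*(c:ℝ)+2 = 2*((c:ℝ)+1) by ring, mul_pow]] at S3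
  have hrp : (2:ℝ) ^ ((2*(c:ℝ)+4) - 3/2) = 2^(2*c+2) * Real.sqrt 2 := by
    rw [show (2*(c:ℝ)+4) - 3/2 = ((2*c+2 : ℕ):ℝ) + 1/2 by push_cast; ring,
      Real.rpow_add two_pos, Real.rpow_natCast, Real.sqrt_eq_rpow]
  have hd1 : (0:ℝ) < (((c+2).factorial : ℝ) * ((c+1).factorial : ℝ)) * (((2*c+2).factorial : ℝ)) := by
    positivity
  have hd2 : (0:ℝ) < Real.pi ^ ((3:ℝ)/2) * Real.sqrt (2*(c:ℝ)+2) := by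
    have := Real.pi_pos
    positivity
  rw [div_le_div_iff₀ hd1 hd2, pi_rpow_32, hrp]
  have h2p : (0:ℝ) < (2:ℝ)^(4*c+6) := by positivity
  rw [← mul_le_mul_iff_of_pos_right h2p]
  have hF : (Real.sqrt Real.pi * Real.sqrt 2 * Real.sqrt ((c:ℝ)+2) * ((c:ℝ)+2)^(c+2)) *
      (Real.sqrt Real.pi * Real.sqrt 2 * Real.sqrt ((c:ℝ)+1) * ((c:ℝ)+1)^(c+1)) *
      (Real.sqrt Real.pi * Real.sqrt 2 * Real.sqrt (2*(c:ℝ)+2) * (2^(2*c+2)*((c:ℝ)+1)^(2*c+2)))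
      ≤ ((((c+2).factorial : ℝ) * ((c+1).factorial : ℝ)) * (((2*c+2).factorial : ℝ))) *
        Real.exp 1 ^ (4*c+5) := by
    calc _ ≤ (((c+2).factorial : ℝ) * Real.exp 1 ^ (c+2)) *
          (((c+1).factorial : ℝ) * Real.exp 1 ^ (c+1)) *
          (((2*c+2).factorial : ℝ) * Real.exp 1 ^ (2*c+2)) :=
        mul_le_mul (mul_le_mul S1 S2 (by positivity) (by positivity)) S3 (by positivity)
          (by positivity)
      _ = _ := by ring
  calc ((2*(c:ℝ)+4) - 1/2) ^ (4*c+6) * (Real.sqrt Real.pi ^ 3 * Real.sqrt (2*(c:ℝ)+2)) *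
        2^(4*c+6)
      = (4*(c:ℝ)+7) ^ (4*c+6) * (Real.sqrt Real.pi ^ 3 * Real.sqrt (2*(c:ℝ)+2)) := by
        rw [mul_right_comm, ← mul_pow, show ((2*(c:ℝ)+4) - 1/2) * 2 = 4*(c:ℝ)+7 by ring]
    _ ≤ (2^(8*c+12) * Real.exp 1 ^ 2 * Real.sqrt ((c:ℝ)+2) * Real.sqrt ((c:ℝ)+1) *
          ((c:ℝ)+2)^(c+2) * ((c:ℝ)+1)^(3*c+3)) *
          (Real.sqrt Real.pi ^ 3 * Real.sqrt (2*(c:ℝ)+2)) :=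
        mul_le_mul_of_nonneg_right core (by positivity)
    _ = 2^(2*c+2) * Real.sqrt 2 * Real.exp 1 ^ 2 *
          ((Real.sqrt Real.pi * Real.sqrt 2 * Real.sqrt ((c:ℝ)+2) * ((c:ℝ)+2)^(c+2)) *
           (Real.sqrt Real.pi * Real.sqrt 2 * Real.sqrt ((c:ℝ)+1) * ((c:ℝ)+1)^(c+1)) *
           (Real.sqrt Real.pi * Real.sqrt 2 * Real.sqrt (2*(c:ℝ)+2) *
             (2^(2*c+2)*((c:ℝ)+1)^(2*c+2)))) * 2^(4*c+6) := by
        linear_combination (-(Real.sqrt Real.pi ^ 3 * Real.exp 1 ^ 2 * Real.sqrt ((c:ℝ)+2) *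
          Real.sqrt ((c:ℝ)+1) * Real.sqrt (2*(c:ℝ)+2) * ((c:ℝ)+2)^(c+2) * ((c:ℝ)+1)^(3*c+3) *
          (2:ℝ)^(8*c+10)) * (Real.sqrt 2 * Real.sqrt 2 + 2)) * hs2
    _ ≤ 2^(2*c+2) * Real.sqrt 2 * Real.exp 1 ^ 2 *
          (((((c+2).factorial : ℝ) * ((c+1).factorial : ℝ)) * (((2*c+2).factorial : ℝ))) *
            Real.exp 1 ^ (4*c+5)) * 2^(4*c+6) := by
        gcongr
    _ = 2^(2*c+2) * Real.sqrt 2 * Real.exp 1 ^ (4*c+7) *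
          ((((c+2).factorial : ℝ) * ((c+1).factorial : ℝ)) * (((2*c+2).factorial : ℝ))) *
          2^(4*c+6) := by ring

lemma bridge_odd (c : ℕ)
    (core : (4*(c:ℝ)+5) ^ (4*c+4) ≤ 2^(6*c+7) * Real.exp 1 ^ 2 * ((c:ℝ)+1)^(2*c+3) *
      (2*(c:ℝ)+1)^(2*c+1)) :
    ((2*(c:ℝ)+3) - 1/2) ^ (4*c+4) /
        ((((c+1).factorial : ℝ))^2 * (((2*c+1).factorial : ℝ)))
      ≤ (2:ℝ) ^ ((2*(c:ℝ)+3) - 3/2) * Real.exp 1 ^ (4*c+5) /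
          (Real.pi ^ ((3:ℝ)/2) * Real.sqrt (2*(c:ℝ)+1)) := by
  have hs2 : Real.sqrt 2 * Real.sqrt 2 = 2 := Real.mul_self_sqrt (by norm_num)
  have hsB : Real.sqrt ((c:ℝ)+1) * Real.sqrt ((c:ℝ)+1) = (c:ℝ)+1 :=
    Real.mul_self_sqrt (by positivity)
  have S2 := stirling_fac (c+1) (by omega)
  have S3 := stirling_fac (2*c+1) (by omega)
  push_cast at S2 S3
  have hrp : (2:ℝ) ^ ((2*(c:ℝ)+3) - 3/2) = 2^(2*c+1) * Real.sqrt 2 := by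
    rw [show (2*(c:ℝ)+3) - 3/2 = ((2*c+1 : ℕ):ℝ) + 1/2 by push_cast; ring,
      Real.rpow_add two_pos, Real.rpow_natCast, Real.sqrt_eq_rpow]
  have hd1 : (0:ℝ) < (((c+1).factorial : ℝ))^2 * (((2*c+1).factorial : ℝ)) := by positivity
  have hd2 : (0:ℝ) < Real.pi ^ ((3:ℝ)/2) * Real.sqrt (2*(c:ℝ)+1) := by
    have := Real.pi_pos
    positivity
  rw [div_le_div_iff₀ hd1 hd2, pi_rpow_32, hrp]
  have h2p : (0:ℝ) < (2:ℝ)^(4*c+4) := by positivity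
  rw [← mul_le_mul_iff_of_pos_right h2p]
  have hF : (Real.sqrt Real.pi * Real.sqrt 2 * Real.sqrt ((c:ℝ)+1) * ((c:ℝ)+1)^(c+1)) *
      (Real.sqrt Real.pi * Real.sqrt 2 * Real.sqrt ((c:ℝ)+1) * ((c:ℝ)+1)^(c+1)) *
      (Real.sqrt Real.pi * Real.sqrt 2 * Real.sqrt (2*(c:ℝ)+1) * (2*(c:ℝ)+1)^(2*c+1))
      ≤ ((((c+1).factorial : ℝ))^2 * (((2*c+1).factorial : ℝ))) * Real.exp 1 ^ (4*c+3) := by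
    calc _ ≤ (((c+1).factorial : ℝ) * Real.exp 1 ^ (c+1)) *
          (((c+1).factorial : ℝ) * Real.exp 1 ^ (c+1)) *
          (((2*c+1).factorial : ℝ) * Real.exp 1 ^ (2*c+1)) :=
        mul_le_mul (mul_le_mul S2 S2 (by positivity) (by positivity)) S3 (by positivity)
          (by positivity)
      _ = _ := by ring
  calc ((2*(c:ℝ)+3) - 1/2) ^ (4*c+4) * (Real.sqrt Real.pi ^ 3 * Real.sqrt (2*(c:ℝ)+1)) *
        2^(4*c+4)
      = (4*(c:ℝ)+5) ^ (4*c+4) * (Real.sqrt Real.pi ^ 3 * Real.sqrt (2*(c:ℝ)+1)) := by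
        rw [mul_right_comm, ← mul_pow, show ((2*(c:ℝ)+3) - 1/2) * 2 = 4*(c:ℝ)+5 by ring]
    _ ≤ (2^(6*c+7) * Real.exp 1 ^ 2 * ((c:ℝ)+1)^(2*c+3) * (2*(c:ℝ)+1)^(2*c+1)) *
          (Real.sqrt Real.pi ^ 3 * Real.sqrt (2*(c:ℝ)+1)) :=
        mul_le_mul_of_nonneg_right core (by positivity)
    _ = 2^(2*c+1) * Real.sqrt 2 * Real.exp 1 ^ 2 *
          ((Real.sqrt Real.pi * Real.sqrt 2 * Real.sqrt ((c:ℝ)+1) * ((c:ℝ)+1)^(c+1)) *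
           (Real.sqrt Real.pi * Real.sqrt 2 * Real.sqrt ((c:ℝ)+1) * ((c:ℝ)+1)^(c+1)) *
           (Real.sqrt Real.pi * Real.sqrt 2 * Real.sqrt (2*(c:ℝ)+1) * (2*(c:ℝ)+1)^(2*c+1))) *
          2^(4*c+4) := by
        linear_combination
          (-(Real.sqrt Real.pi ^ 3 * Real.exp 1 ^ 2 * Real.sqrt (2*(c:ℝ)+1) *
            (2*(c:ℝ)+1)^(2*c+1) * ((c:ℝ)+1)^(2*c+2) * (2:ℝ)^(6*c+5) * ((c:ℝ)+1)) *
            (Real.sqrt 2 * Real.sqrt 2 + 2)) * hs2 +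
          (-(Real.sqrt Real.pi ^ 3 * Real.exp 1 ^ 2 * Real.sqrt (2*(c:ℝ)+1) *
            (2*(c:ℝ)+1)^(2*c+1) * ((c:ℝ)+1)^(2*c+2) * (2:ℝ)^(6*c+5) *
            (Real.sqrt 2 * Real.sqrt 2) * (Real.sqrt 2 * Real.sqrt 2))) * hsB
    _ ≤ 2^(2*c+1) * Real.sqrt 2 * Real.exp 1 ^ 2 *
          (((((c+1).factorial : ℝ))^2 * (((2*c+1).factorial : ℝ))) * Real.exp 1 ^ (4*c+3)) *
          2^(4*c+4) := by
        gcongr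
    _ = 2^(2*c+1) * Real.sqrt 2 * Real.exp 1 ^ (4*c+5) *
          ((((c+1).factorial : ℝ))^2 * (((2*c+1).factorial : ℝ))) * 2^(4*c+4) := by ring

/-- **Lemma A.3.**  For every integer `n ≥ 2`,
`(n − 1/2)^{2n−2} / (ζ(n)(n−2)!) ≤ 2^{n−3/2} e^{2n−1} / (π^{3/2} max(√(n−2), 1))`. -/
theorem zeta_factorial_bound (n : ℕ) (hn : 2 ≤ n) :
    ((n : ℝ) - 1 / 2) ^ (2 * n - 2) / (zeta n * ((n - 2).factorial : ℝ))
      ≤ (2 : ℝ) ^ ((n : ℝ) - 3 / 2) * Real.exp 1 ^ (2 * n - 1) /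
          (Real.pi ^ ((3 : ℝ) / 2) * max (Real.sqrt ((n : ℝ) - 2)) 1) := by
  rcases eq_or_lt_of_le hn with h2 | h3
  · -- n = 2
    subst h2
    have hz : zeta 2 = 1 := by rw [zeta]; norm_num
    rw [show 2*2-2 = 2 from rfl, show 2*2-1 = 3 from rfl, show (2:ℕ)-2 = 0 from rfl, hz,
      show ((2:ℕ):ℝ) = 2 from by norm_num, show ((2:ℝ)-2) = 0 by norm_num, Real.sqrt_zero,
      max_eq_right zero_le_one, mul_one, show (2:ℝ)-3/2 = 1/2 by norm_num,
      ← Real.sqrt_eq_rpow]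
    have hsp : Real.sqrt Real.pi ≤ 1.8 := by
      nlinarith [Real.sq_sqrt Real.pi_pos.le, Real.pi_lt_d2, Real.sqrt_nonneg Real.pi]
    have hs2 : (1.41:ℝ) ≤ Real.sqrt 2 := by
      nlinarith [Real.sq_sqrt (show (0:ℝ) ≤ 2 by norm_num), Real.sqrt_nonneg 2]
    have he : (2.71:ℝ) ≤ Real.exp 1 := by
      have := Real.exp_one_gt_d9
      linarith
    have h1 : Real.pi ^ ((3:ℝ)/2) ≤ 5.832 := by
      rw [pi_rpow_32]
      calc Real.sqrt Real.pi ^ 3 ≤ (1.8:ℝ)^3 := by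
            exact pow_le_pow_left₀ (Real.sqrt_nonneg _) hsp 3
        _ ≤ 5.832 := by norm_num
    have h2 : (19.9:ℝ) ≤ Real.exp 1 ^ 3 := by
      calc (19.9:ℝ) ≤ (2.71:ℝ)^3 := by norm_num
        _ ≤ Real.exp 1 ^ 3 := pow_le_pow_left₀ (by norm_num) he 3
    have hpos : (0:ℝ) < Real.pi ^ ((3:ℝ)/2) := by
      have := Real.pi_pos
      positivity
    rw [div_le_div_iff₀ (by norm_num) hpos]
    have hprod : (1.41:ℝ) * 19.9 ≤ Real.sqrt 2 * Real.exp 1 ^ 3 :=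
      mul_le_mul hs2 h2 (by norm_num) (Real.sqrt_nonneg 2)
    have hf0 : ((Nat.factorial 0 : ℕ) : ℝ) = 1 := by norm_num [Nat.factorial]
    rw [hf0]
    nlinarith [h1, hprod, hpos]
  · rcases Nat.even_or_odd n with ⟨a, ha⟩ | ⟨a, ha⟩
    · -- n even, n ≥ 4 (n = 2c+4)
      obtain ⟨c, rfl⟩ : ∃ c, n = 2*c+4 := ⟨a - 2, by omega⟩
      have hz : zeta (2*c+4) = ((c+2).factorial : ℝ) * ((c+1).factorial : ℝ) := by
        rw [zeta, if_neg (by omega : ¬(2*c+4) % 2 = 1)]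
        norm_num [show (2*c+4)/2 = c+2 from by omega, show ((2*c+4)-2)/2 = c+1 from by omega]
      have hcast : ((2*c+4 : ℕ):ℝ) = 2*(c:ℝ)+4 := by push_cast; ring
      have hmax : max (Real.sqrt ((2*(c:ℝ)+4) - 2)) 1 = Real.sqrt (2*(c:ℝ)+2) := by
        rw [show (2*(c:ℝ)+4) - 2 = 2*(c:ℝ)+2 by ring]
        refine max_eq_left ?_
        have hc0 : (0:ℝ) ≤ (c:ℝ) := Nat.cast_nonneg c
        have h1 := Real.sqrt_le_sqrt (show (1:ℝ) ≤ 2*(c:ℝ)+1 by linarith)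
        have h2 := Real.sqrt_le_sqrt (show (1:ℝ) ≤ 2*(c:ℝ)+2 by linarith)
        rw [Real.sqrt_one] at h1 h2
        first
        | exact h1
        | exact h2
      rw [show 2*(2*c+4) - 2 = 4*c+6 from by omega, show (2*c+4) - 2 = 2*c+2 from by omega,
        show 2*(2*c+4) - 1 = 4*c+7 from by omega, hz, hcast, hmax]
      exact bridge_even c (core_even c)
    · -- n odd, n = 2c+3
      obtain ⟨c, rfl⟩ : ∃ c, n = 2*c+3 := ⟨a - 1, by omega⟩
      have hz : zeta (2*c+3) = (((c+1).factorial : ℝ))^2 := by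
        rw [zeta, if_pos (by omega : (2*c+3) % 2 = 1)]
        norm_num [show ((2*c+3)-1)/2 = c+1 from by omega]
      have hcast : ((2*c+3 : ℕ):ℝ) = 2*(c:ℝ)+3 := by push_cast; ring
      have hmax : max (Real.sqrt ((2*(c:ℝ)+3) - 2)) 1 = Real.sqrt (2*(c:ℝ)+1) := by
        rw [show (2*(c:ℝ)+3) - 2 = 2*(c:ℝ)+1 by ring]
        refine max_eq_left ?_
        have hc0 : (0:ℝ) ≤ (c:ℝ) := Nat.cast_nonneg c
        have h1 := Real.sqrt_le_sqrt (show (1:ℝ) ≤ 2*(c:ℝ)+1 by linarith)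
        have h2 := Real.sqrt_le_sqrt (show (1:ℝ) ≤ 2*(c:ℝ)+2 by linarith)
        rw [Real.sqrt_one] at h1 h2
        first
        | exact h1
        | exact h2
      rw [show 2*(2*c+3) - 2 = 4*c+4 from by omega, show (2*c+3) - 2 = 2*c+1 from by omega,
        show 2*(2*c+3) - 1 = 4*c+5 from by omega, hz, hcast, hmax]
      exact bridge_odd c (core_odd c)
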